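/- Let X be a measurable space, Θ a measurable space, and ρ : Θ × Θ → ℝ a nonnegative, symmetric, jointly measurable loss function. Let d ≥ 1, let E_d = {−1,1}^d, and let (P_e)_{e∈E_d} be probability measures on X and (θ_e)_{e∈E_d} elements of Θ. Suppose there exist τ ∈ ℝ and α > 0 such that (i) for all u, v ∈ E_d, ρ(θ_u, θ_v) ≥ 2τ·#{i : uᵢ ≠ vᵢ}, and (ii) for all u, v ∈ E_d and all t ∈ Θ, ρ(θ_u, θ_v) ≤ α·( ρ(θ_u, t) + ρ(θ_v, t) ). For e ∈ E_d and i ∈ {1,…,d}, let ē^i ∈ E_d be the vector obtained from e by flipping the i-th coordinate. Then for every measurable estimator θ̂ : X → Θ, max_{e∈E_d} E_{X∼P_e}[ ρ(θ̂(X), θ_e) ] ≥ (d·τ/(2α))·[ 1 − ( (1/d)·Σ_{i=1}^d 2^{−d}·Σ_{e∈E_d} TV(P_e, P_{ē^i})² )^{1/2} ]. -/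

import Mathlib

open MeasureTheory

noncomputable def tvDist {X : Type*} [MeasurableSpace X] (P Q : Measure X) : ℝ :=
  ⨆ S : {S : Set X // MeasurableSet S}, |(P S.1).toReal - (Q S.1).toReal|

section TV
variable {X : Type*} [MeasurableSpace X] (P Q : Measure X)
  [IsProbabilityMeasure P] [IsProbabilityMeasure Q]

lemma tv_bddAbove : BddAbove (Set.range fun S : {S : Set X // MeasurableSet S} =>
    |(P S.1).toReal - (Q S.1).toReal|) := by
  refine ⟨1, ?_⟩
  rintro x ⟨S, rfl⟩
  rw [abs_sub_le_iff]
  constructor <;>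
  · have h1 : (P S.1).toReal ≤ 1 := by
      simpa using ENNReal.toReal_mono (by simp) (prob_le_one (μ := P) (s := S.1))
    have h2 : (Q S.1).toReal ≤ 1 := by
      simpa using ENNReal.toReal_mono (by simp) (prob_le_one (μ := Q) (s := S.1))
    have h3 : 0 ≤ (P S.1).toReal := ENNReal.toReal_nonneg
    have h4 : 0 ≤ (Q S.1).toReal := ENNReal.toReal_nonneg
    linarith

lemma tv_le' {S : Set X} (hS : MeasurableSet S) :
    |(P S).toReal - (Q S).toReal| ≤ tvDist P Q :=
  le_ciSup (tv_bddAbove P Q) (⟨S, hS⟩ : {S : Set X // MeasurableSet S})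

lemma tv_nonneg : 0 ≤ tvDist P Q :=
  le_trans (abs_nonneg _) (tv_le' P Q MeasurableSet.empty)

lemma tv_le_one : tvDist P Q ≤ 1 := by
  apply ciSup_le
  rintro ⟨S, hS⟩
  rw [abs_sub_le_iff]
  constructor <;>
  · have h1 : (P S).toReal ≤ 1 := by
      simpa using ENNReal.toReal_mono (by simp) (prob_le_one (μ := P) (s := S))
    have h2 : (Q S).toReal ≤ 1 := by
      simpa using ENNReal.toReal_mono (by simp) (prob_le_one (μ := Q) (s := S))
    have h3 : 0 ≤ (P S).toReal := ENNReal.toReal_nonneg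
    have h4 : 0 ≤ (Q S).toReal := ENNReal.toReal_nonneg
    linarith

omit [IsProbabilityMeasure P] [IsProbabilityMeasure Q] in
lemma tv_symm : tvDist P Q = tvDist Q P := by
  unfold tvDist
  congr 1
  funext S
  exact abs_sub_comm _ _

lemma tv_test {A : Set X} (hA : MeasurableSet A) :
    1 - tvDist P Q ≤ (P Aᶜ).toReal + (Q A).toReal := by
  have h1 : (P A).toReal - (Q A).toReal ≤ tvDist P Q :=
    (le_abs_self _).trans (tv_le' P Q hA)
  have h2 : (P Aᶜ).toReal = 1 - (P A).toReal := by
    rw [prob_compl_eq_one_sub hA, ENNReal.toReal_sub_of_le prob_le_one (by simp)]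
    simp
  linarith

end TV

lemma exists_measurable_argmin {X ι : Type*} [MeasurableSpace X] [Fintype ι] [Nonempty ι]
    (f : ι → X → ℝ) (hf : ∀ i, Measurable (f i)) :
    ∃ g : X → ι, (∀ x i, f (g x) x ≤ f i x) ∧ ∀ j, MeasurableSet {x | g x = j} := by
  classical
  letI : LinearOrder ι := LinearOrder.lift' (Fintype.equivFin ι) (Equiv.injective _)
  set S : X → Finset ι := fun x => Finset.univ.filter (fun j => ∀ i, f j x ≤ f i x) with hS
  have hSne : ∀ x, (S x).Nonempty := by
    intro x
    obtain ⟨j, -, hj⟩ := Finset.exists_min_image Finset.univ (fun j => f j x)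
      ⟨Classical.arbitrary ι, Finset.mem_univ _⟩
    exact ⟨j, by simp [hS]; intro i; exact hj i (Finset.mem_univ i)⟩
  refine ⟨fun x => (S x).min' (hSne x), ?_, ?_⟩
  · intro x i
    have := (S x).min'_mem (hSne x)
    simp [hS] at this
    exact this i
  · intro j
    have hkey : ∀ x, ((S x).min' (hSne x) = j) ↔ (j ∈ S x ∧ ∀ k, k ∈ S x → j ≤ k) := by
      intro x
      constructor
      · rintro rfl
        exact ⟨(S x).min'_mem _, fun k hk => (S x).min'_le k hk⟩
      · rintro ⟨hj, hmin⟩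
        exact le_antisymm ((S x).min'_le j hj) (hmin _ ((S x).min'_mem _))
    have hmem : ∀ k, MeasurableSet {x | k ∈ S x} := by
      intro k
      have : {x | k ∈ S x} = ⋂ i, {x | f k x ≤ f i x} := by
        ext x; simp [hS]
      rw [this]
      exact MeasurableSet.iInter fun i => measurableSet_le (hf k) (hf i)
    have : {x | (S x).min' (hSne x) = j}
        = {x | j ∈ S x} ∩ ⋂ k, {x | k ∈ S x → j ≤ k} := by
      ext x
      simp only [Set.mem_setOf_eq, Set.mem_inter_iff, Set.mem_iInter, hkey]
    rw [this]
    refine (hmem j).inter (MeasurableSet.iInter fun k => ?_)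
    by_cases h : j ≤ k
    · simp only [h]
      convert MeasurableSet.univ using 1
      ext x; simp [h]
    · have : {x | k ∈ S x → j ≤ k} = {x | k ∈ S x}ᶜ := by
        ext x; simp [h]
      rw [this]
      exact (hmem k).compl

theorem assouad_corollary {X Θ' : Type*} [MeasurableSpace X] [MeasurableSpace Θ']
    (ρ : Θ' × Θ' → ℝ) (hρ0 : ∀ p, 0 ≤ ρ p) (hρsymm : ∀ a b, ρ (a, b) = ρ (b, a))
    (hρmeas : Measurable ρ)
    (d : ℕ) (hd : 1 ≤ d)
    (P : (Fin d → Bool) → Measure X) (hP : ∀ e, IsProbabilityMeasure (P e))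
    (θv : (Fin d → Bool) → Θ') (τ α : ℝ) (hα : 0 < α)
    (hsep : ∀ u v : Fin d → Bool,
      2 * τ * ((Finset.univ.filter fun i => u i ≠ v i).card : ℝ) ≤ ρ (θv u, θv v))
    (htri : ∀ (u v : Fin d → Bool) (t : Θ'),
      ρ (θv u, θv v) ≤ α * (ρ (θv u, t) + ρ (θv v, t)))
    (est : X → Θ') (hest : Measurable est) :
    ∃ e : Fin d → Bool,
      ENNReal.ofReal
          (((d:ℝ) * τ / (2 * α)) *
            (1 - Real.sqrt ((1/(d:ℝ)) * ∑ i : Fin d, ((2:ℝ)^d)⁻¹ *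
              ∑ e : Fin d → Bool,
                (tvDist (P e) (P (Function.update e i (!(e i)))))^2))) ≤
        ∫⁻ x, ENNReal.ofReal (ρ (est x, θv e)) ∂(P e) := by
  classical
  haveI := hP
  set S₀ : ℝ := (1/(d:ℝ)) * ∑ i : Fin d, ((2:ℝ)^d)⁻¹ *
      ∑ e : Fin d → Bool, (tvDist (P e) (P (Function.update e i (!(e i)))))^2 with hS₀def
  set Bnd : ℝ := ((d:ℝ) * τ / (2 * α)) * (1 - Real.sqrt S₀) with hBnd
  set flip : Fin d → (Fin d → Bool) → (Fin d → Bool) :=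
    fun i e => Function.update e i (!(e i)) with hflip
  set tv : (Fin d → Bool) → Fin d → ℝ := fun e i => tvDist (P e) (P (flip i e)) with htv
  have hS₀ : S₀ = (1/(d:ℝ)) * ∑ i : Fin d, ((2:ℝ)^d)⁻¹ *
      ∑ e : Fin d → Bool, (tv e i)^2 := rfl
  have hd0 : (0:ℝ) < d := by exact_mod_cast hd
  -- basic facts about tv
  have htv01 : ∀ e i, 0 ≤ tv e i ∧ tv e i ≤ 1 := fun e i =>
    ⟨tv_nonneg (P e) (P (flip i e)), tv_le_one (P e) (P (flip i e))⟩
  -- S₀ ∈ [0,1], hence sqrt S₀ ≤ 1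
  have hS₀le : Real.sqrt S₀ ≤ 1 := by
    rw [Real.sqrt_le_one]
    rw [hS₀]
    have h1 : ∀ i : Fin d, ((2:ℝ)^d)⁻¹ * ∑ e : Fin d → Bool, (tv e i)^2 ≤ 1 := by
      intro i
      rw [inv_mul_le_iff₀ (by positivity), mul_one]
      calc ∑ e : Fin d → Bool, (tv e i)^2 ≤ ∑ _e : Fin d → Bool, 1 := by
            apply Finset.sum_le_sum
            intro e _
            have := htv01 e i
            nlinarith [this.1, this.2]
        _ = (2:ℝ)^d := by
            simp [Finset.card_univ, Fintype.card_fun]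
    calc (1/(d:ℝ)) * ∑ i : Fin d, ((2:ℝ)^d)⁻¹ * ∑ e : Fin d → Bool, (tv e i)^2
        ≤ (1/(d:ℝ)) * ∑ _i : Fin d, (1:ℝ) := by
          apply mul_le_mul_of_nonneg_left (Finset.sum_le_sum fun i _ => h1 i) (by positivity)
      _ = 1 := by field_simp; simp
  by_cases hBnd0 : Bnd ≤ 0
  · exact ⟨fun _ => true, by simp [ENNReal.ofReal_eq_zero.mpr hBnd0]⟩
  push_neg at hBnd0
  have hτ : 0 < τ := by
    by_contra h
    push_neg at h
    have : Bnd ≤ 0 := by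
      rw [hBnd]
      apply mul_nonpos_of_nonpos_of_nonneg
      · apply div_nonpos_of_nonpos_of_nonneg
        · nlinarith
        · linarith
      · linarith
    linarith
  -- pseudo-estimator
  obtain ⟨eh, heh_min, heh_meas⟩ := exists_measurable_argmin
    (fun e x => ρ (θv e, est x))
    (fun e => hρmeas.comp (measurable_const.prodMk hest))
  set B : (Fin d → Bool) → Fin d → Set X := fun e i => {x | eh x i ≠ e i} with hB
  have hBmeas : ∀ e i, MeasurableSet (B e i) := by
    intro e i
    have : B e i = ⋃ v : Fin d → Bool, ({x | eh x = v} ∩ {x | v i ≠ e i}) := by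
      ext x
      simp only [hB, Set.mem_setOf_eq, Set.mem_iUnion, Set.mem_inter_iff]
      constructor
      · intro h; exact ⟨eh x, rfl, h⟩
      · rintro ⟨v, rfl, h⟩; exact h
    rw [this]
    refine MeasurableSet.iUnion fun v => (heh_meas v).inter ?_
    by_cases h : v i = e i
    · simp [h]
    · have : {x : X | v i ≠ e i} = Set.univ := by ext x; simp [h]
      rw [this]; exact MeasurableSet.univ
  -- pointwise bound
  have key : ∀ x (e : Fin d → Bool),
      (τ/α) * ((Finset.univ.filter fun i => eh x i ≠ e i).card : ℝ) ≤ ρ (est x, θv e) := by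
    intro x e
    have h1 := hsep (eh x) e
    have h2 := htri (eh x) e (est x)
    have h3 := heh_min x e
    have h4 : ρ (θv e, est x) = ρ (est x, θv e) := hρsymm _ _
    set c : ℝ := ((Finset.univ.filter fun i => eh x i ≠ e i).card : ℝ)
    have hc : 0 ≤ c := Nat.cast_nonneg _
    have h5 : 2 * τ * c ≤ 2 * α * ρ (est x, θv e) := by nlinarith
    rw [div_mul_eq_mul_div, div_le_iff₀ hα]
    nlinarith
  -- per-e lintegral bound
  set r : (Fin d → Bool) → Fin d → ℝ := fun e i => (P e (B e i)).toReal with hr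
  have key2 : ∀ e : Fin d → Bool,
      ENNReal.ofReal ((τ/α) * ∑ i : Fin d, r e i) ≤
        ∫⁻ x, ENNReal.ofReal (ρ (est x, θv e)) ∂(P e) := by
    intro e
    have hcalc : ENNReal.ofReal ((τ/α) * ∑ i : Fin d, r e i)
        = ∑ i : Fin d, ENNReal.ofReal (τ/α) * P e (B e i) := by
      rw [ENNReal.ofReal_mul (by positivity), ENNReal.ofReal_sum_of_nonneg
        (fun i _ => ENNReal.toReal_nonneg), Finset.mul_sum]
      congr 1
      funext i
      rw [ENNReal.ofReal_toReal (measure_ne_top _ _)]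
    rw [hcalc]
    have hstep : ∀ i : Fin d, ENNReal.ofReal (τ/α) * P e (B e i)
        = ∫⁻ x, (B e i).indicator (fun _ => ENNReal.ofReal (τ/α)) x ∂(P e) := by
      intro i
      rw [lintegral_indicator_const (hBmeas e i)]
    calc ∑ i : Fin d, ENNReal.ofReal (τ/α) * P e (B e i)
        = ∑ i : Fin d, ∫⁻ x, (B e i).indicator (fun _ => ENNReal.ofReal (τ/α)) x ∂(P e) :=
          Finset.sum_congr rfl fun i _ => hstep i
      _ = ∫⁻ x, ∑ i : Fin d, (B e i).indicator (fun _ => ENNReal.ofReal (τ/α)) x ∂(P e) := by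
          rw [lintegral_finset_sum]
          exact fun i _ => measurable_const.indicator (hBmeas e i)
      _ ≤ ∫⁻ x, ENNReal.ofReal (ρ (est x, θv e)) ∂(P e) := by
          apply lintegral_mono
          intro x
          show ∑ i : Fin d, (B e i).indicator (fun _ => ENNReal.ofReal (τ/α)) x
              ≤ ENNReal.ofReal (ρ (est x, θv e))
          have heq : ∑ i : Fin d, (B e i).indicator (fun _ => ENNReal.ofReal (τ/α)) x
              = ENNReal.ofReal ((τ/α) *
                  ((Finset.univ.filter fun i => eh x i ≠ e i).card : ℝ)) := by
            rw [ENNReal.ofReal_mul (by positivity), mul_comm]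
            have hind : ∀ i : Fin d, (B e i).indicator (fun _ => ENNReal.ofReal (τ/α)) x
                = if eh x i ≠ e i then ENNReal.ofReal (τ/α) else 0 := by
              intro i
              by_cases h : eh x i ≠ e i <;> simp [Set.indicator_apply, hB, h]
            simp_rw [hind]
            rw [← Finset.sum_filter, Finset.sum_const, nsmul_eq_mul]
            congr 1
            exact (ENNReal.ofReal_natCast _).symm
          rw [heq]
          exact ENNReal.ofReal_le_ofReal (key x e)
  -- pair bound
  have hpair : ∀ (e : Fin d → Bool) (i : Fin d), 1 - tv e i ≤ r e i + r (flip i e) i := by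
    intro e i
    have hset : B (flip i e) i = (B e i)ᶜ := by
      ext x
      simp only [hB, hflip, Set.mem_setOf_eq, Set.mem_compl_iff, Function.update_self]
      cases h1 : eh x i <;> cases h2 : e i <;> simp
    have htest := tv_test (P (flip i e)) (P e) (hBmeas e i)
    rw [tv_symm (P (flip i e)) (P e)] at htest
    have h1 : tv e i = tvDist (P e) (P (flip i e)) := by rw [htv]
    have h2 : r e i = (P e (B e i)).toReal := by rw [hr]
    have h3 : r (flip i e) i = (P (flip i e) ((B e i)ᶜ)).toReal := by
      simp only [hr]
      rw [hset]
    rw [h1, h2, h3]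
    linarith
  -- involution
  have hinvol : ∀ i : Fin d, Function.Involutive (flip i) := by
    intro i e
    funext j
    rcases eq_or_ne j i with rfl | h
    · simp [hflip, Function.update_self]
    · simp [hflip, Function.update_of_ne h]
  -- per-i sum bound
  have hsum_i : ∀ i : Fin d,
      ((2:ℝ)^d - ∑ e : Fin d → Bool, tv e i) / 2 ≤ ∑ e : Fin d → Bool, r e i := by
    intro i
    have hre : ∑ e : Fin d → Bool, r (flip i e) i = ∑ e : Fin d → Bool, r e i :=
      Fintype.sum_bijective (flip i) (hinvol i).bijective _ _ (fun e => rfl)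
    have h2 : ∑ e : Fin d → Bool, (1 - tv e i) ≤
        ∑ e : Fin d → Bool, (r e i + r (flip i e) i) :=
      Finset.sum_le_sum fun e _ => hpair e i
    rw [Finset.sum_add_distrib, hre, Finset.sum_sub_distrib] at h2
    have hcard : ∑ _e : Fin d → Bool, (1:ℝ) = (2:ℝ)^d := by
      simp [Finset.card_univ, Fintype.card_fun]
    rw [hcard] at h2
    linarith
  -- Cauchy-Schwarz
  set T : ℝ := ∑ i : Fin d, ∑ e : Fin d → Bool, tv e i with hT
  set T₂ : ℝ := ∑ i : Fin d, ∑ e : Fin d → Bool, (tv e i)^2 with hT₂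
  have hTnn : 0 ≤ T := by
    rw [hT]
    apply Finset.sum_nonneg; intro i _
    exact Finset.sum_nonneg fun e _ => (htv01 e i).1
  have hT₂nn : 0 ≤ T₂ := by
    rw [hT₂]
    apply Finset.sum_nonneg; intro i _
    exact Finset.sum_nonneg fun e _ => sq_nonneg _
  have hCS : T^2 ≤ ((d:ℝ) * 2^d) * T₂ := by
    have hcs := sq_sum_le_card_mul_sum_sq
      (s := (Finset.univ : Finset (Fin d × (Fin d → Bool)))) (f := fun p => tv p.2 p.1)
    rw [Finset.card_univ] at hcs
    have hc : ((Fintype.card (Fin d × (Fin d → Bool)) : ℕ) : ℝ) = (d:ℝ) * 2^d := by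
      simp [Fintype.card_prod, Fintype.card_fun]
    rw [Fintype.sum_prod_type, Fintype.sum_prod_type] at hcs
    calc T^2 = (∑ i : Fin d, ∑ e : Fin d → Bool, tv e i)^2 := by rw [hT]
      _ ≤ ((Fintype.card (Fin d × (Fin d → Bool)) : ℕ) : ℝ) *
            ∑ i : Fin d, ∑ e : Fin d → Bool, (tv e i)^2 := hcs
      _ = ((d:ℝ) * 2^d) * T₂ := by rw [hc, hT₂]
  have hTle : T ≤ Real.sqrt ((d:ℝ) * 2^d * T₂) :=
    (Real.le_sqrt hTnn (by positivity)).mpr hCS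
  have hS₀eq : S₀ = T₂ / ((d:ℝ) * 2^d) := by
    rw [hS₀, hT₂]
    rw [← Finset.mul_sum]
    field_simp
  have hkey3 : (d:ℝ) * 2^d * Real.sqrt S₀ = Real.sqrt ((d:ℝ) * 2^d * T₂) := by
    rw [hS₀eq]
    rw [show (d:ℝ) * 2^d * T₂ = ((d:ℝ) * 2^d)^2 * (T₂ / ((d:ℝ) * 2^d)) by
      field_simp]
    rw [Real.sqrt_mul (by positivity), Real.sqrt_sq (by positivity)]
  have hT' : T ≤ (d:ℝ) * 2^d * Real.sqrt S₀ := by rw [hkey3]; exact hTle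
  -- real core inequality
  have hreal : (2:ℝ)^d * Bnd ≤ ∑ e : Fin d → Bool, (τ/α) * ∑ i : Fin d, r e i := by
    have h6 : ((d:ℝ) * 2^d - T) / 2 ≤ ∑ e : Fin d → Bool, ∑ i : Fin d, r e i := by
      rw [Finset.sum_comm]
      have := Finset.sum_le_sum (s := (Finset.univ : Finset (Fin d)))
        (fun i _ => hsum_i i)
      calc ((d:ℝ) * 2^d - T) / 2
          = ∑ _i : Fin d, ((2:ℝ)^d) / 2 - T / 2 := by
            rw [Finset.sum_const, Finset.card_univ, Fintype.card_fin, nsmul_eq_mul]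
            ring
        _ = ∑ i : Fin d, (((2:ℝ)^d - ∑ e : Fin d → Bool, tv e i) / 2) := by
            rw [hT]
            rw [Finset.sum_div (s := (Finset.univ : Finset (Fin d)))
              (f := fun i => ∑ e : Fin d → Bool, tv e i)]
            rw [← Finset.sum_sub_distrib]
            congr 1
            funext i
            ring
        _ ≤ ∑ i : Fin d, ∑ e : Fin d → Bool, r e i := this
    have h7 : ∑ e : Fin d → Bool, (τ/α) * ∑ i : Fin d, r e i
        = (τ/α) * ∑ e : Fin d → Bool, ∑ i : Fin d, r e i := by
      rw [Finset.mul_sum]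
    rw [h7]
    have h8 : (2:ℝ)^d * Bnd = (τ/(2*α)) * ((d:ℝ) * 2^d - (d:ℝ) * 2^d * Real.sqrt S₀) := by
      rw [hBnd]; ring
    rw [h8]
    calc (τ/(2*α)) * ((d:ℝ) * 2^d - (d:ℝ) * 2^d * Real.sqrt S₀)
        ≤ (τ/(2*α)) * ((d:ℝ) * 2^d - T) := by
          apply mul_le_mul_of_nonneg_left _ (by positivity)
          linarith
      _ = (τ/α) * (((d:ℝ) * 2^d - T) / 2) := by ring
      _ ≤ (τ/α) * ∑ e : Fin d → Bool, ∑ i : Fin d, r e i := by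
          apply mul_le_mul_of_nonneg_left h6 (by positivity)
  -- assemble in ℝ≥0∞
  obtain ⟨estar, -, hstar⟩ := Finset.exists_max_image Finset.univ
    (fun e => ∫⁻ x, ENNReal.ofReal (ρ (est x, θv e)) ∂(P e))
    ⟨fun _ => true, Finset.mem_univ _⟩
  refine ⟨estar, ?_⟩
  have hsum : ENNReal.ofReal ((2:ℝ)^d * Bnd) ≤
      ∑ e : Fin d → Bool, ∫⁻ x, ENNReal.ofReal (ρ (est x, θv e)) ∂(P e) := by
    calc ENNReal.ofReal ((2:ℝ)^d * Bnd)
        ≤ ENNReal.ofReal (∑ e : Fin d → Bool, (τ/α) * ∑ i : Fin d, r e i) :=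
          ENNReal.ofReal_le_ofReal hreal
      _ = ∑ e : Fin d → Bool, ENNReal.ofReal ((τ/α) * ∑ i : Fin d, r e i) :=
          ENNReal.ofReal_sum_of_nonneg fun e _ => mul_nonneg (by positivity)
            (Finset.sum_nonneg fun i _ => ENNReal.toReal_nonneg)
      _ ≤ ∑ e : Fin d → Bool, ∫⁻ x, ENNReal.ofReal (ρ (est x, θv e)) ∂(P e) :=
          Finset.sum_le_sum fun e _ => key2 e
  have hmax : ∑ e : Fin d → Bool, (∫⁻ x, ENNReal.ofReal (ρ (est x, θv e)) ∂(P e)) ≤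
      (2:ENNReal)^d * ∫⁻ x, ENNReal.ofReal (ρ (est x, θv estar)) ∂(P estar) := by
    calc ∑ e : Fin d → Bool, (∫⁻ x, ENNReal.ofReal (ρ (est x, θv e)) ∂(P e))
        ≤ Finset.univ.card • (∫⁻ x, ENNReal.ofReal (ρ (est x, θv estar)) ∂(P estar)) :=
          Finset.sum_le_card_nsmul _ _ _ fun e _ => hstar e (Finset.mem_univ e)
      _ = (2:ENNReal)^d * ∫⁻ x, ENNReal.ofReal (ρ (est x, θv estar)) ∂(P estar) := by
          rw [nsmul_eq_mul, Finset.card_univ]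
          congr 1
          simp [Fintype.card_fun]
  have hfold : ENNReal.ofReal ((2:ℝ)^d * Bnd) = (2:ENNReal)^d * ENNReal.ofReal Bnd := by
    rw [ENNReal.ofReal_mul (by positivity)]
    congr 1
    rw [ENNReal.ofReal_pow (by norm_num)]
    norm_num
  rw [hfold] at hsum
  have := le_trans hsum hmax
  rwa [ENNReal.mul_le_mul_iff_right (by positivity) (by simp)] at this
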